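/- Let n ≥ 3 and let g ∈ S_n. Suppose there exists a complete map P of order n such that g*∘P∘(g*)⁻¹ = P. Then the quantity lcm(l^g(i), l^g(j)) is the same for all pairs of distinct vertices: for any i ≠ j and k ≠ l in Fin n, lcm(l^g(i), l^g(j)) = lcm(l^g(k), l^g(l)). -/

import Mathlib

/-- The quadricells of the complete graph `K_n`: pairs `((i,j),ε)` with `i ≠ j`. -/
abbrev Quadricells (n : ℕ) := {x : (Fin n × Fin n) × Bool // x.1.1 ≠ x.1.2}

/-- Negation as a permutation of `Bool`. -/
def boolNeg : Equiv.Perm Bool :=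
  ⟨Bool.not, Bool.not, fun b => by cases b <;> rfl, fun b => by cases b <;> rfl⟩

/-- The involution `α ((i,j),ε) = ((i,j), ¬ε)`. -/
def mapAlpha (n : ℕ) : Equiv.Perm (Quadricells n) :=
  Equiv.Perm.subtypePerm (Equiv.prodCongr (Equiv.refl (Fin n × Fin n)) boolNeg)
    (fun _ => Iff.rfl)

/-- The involution `β ((i,j),ε) = ((j,i), ε)`. -/
def mapBeta (n : ℕ) : Equiv.Perm (Quadricells n) :=
  Equiv.Perm.subtypePerm (Equiv.prodCongr (Equiv.prodComm (Fin n) (Fin n)) (Equiv.refl Bool))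
    (fun _ => ne_comm)

/-- The extended action of `g ∈ S_n` on quadricells: `g* ((i,j),ε) = ((g i, g j), ε)`. -/
def gStar {n : ℕ} (g : Equiv.Perm (Fin n)) : Equiv.Perm (Quadricells n) :=
  Equiv.Perm.subtypePerm (Equiv.prodCongr (Equiv.prodCongr g g) (Equiv.refl Bool))
    (fun _ => g.injective.ne_iff)

/-- The cardinality of the `⟨P⟩`-orbit of `x`. -/
noncomputable def orbLen {X : Type*} (P : Equiv.Perm X) (x : X) : ℕ :=
  Set.ncard {y | ∃ m : ℤ, (P ^ m) x = y}

/-- A complete map of order `n`. -/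
def IsCompleteMap {n : ℕ} (P : Equiv.Perm (Quadricells n)) : Prop :=
  (∀ x : Quadricells n, ((P x : (Fin n × Fin n) × Bool)).1.1 = (x : (Fin n × Fin n) × Bool).1.1) ∧
  mapAlpha n * P * mapAlpha n = P⁻¹ ∧
  (∀ (x : Quadricells n) (m : ℤ), (P ^ m) x ≠ mapAlpha n x) ∧
  (∀ x : Quadricells n, orbLen P x = n - 1)

/-- A complete map is non-orientable when `⟨αβ, P⟩` is transitive on the quadricells. -/
def NonOrientable {n : ℕ} (P : Equiv.Perm (Quadricells n)) : Prop :=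
  ∀ x y : Quadricells n, ∃ σ ∈ Subgroup.closure {mapAlpha n * mapBeta n, P}, σ x = y

/-- `τ` is an automorphism of the map `P`. -/
def IsMapAut {n : ℕ} (P τ : Equiv.Perm (Quadricells n)) : Prop :=
  τ * mapAlpha n = mapAlpha n * τ ∧ τ * mapBeta n = mapBeta n * τ ∧ τ * P * τ⁻¹ = P

/-- Isomorphism of maps on the quadricells of `K_n`. -/
def MapIso {n : ℕ} (P Q : Equiv.Perm (Quadricells n)) : Prop :=
  ∃ τ : Equiv.Perm (Quadricells n),
    τ * mapAlpha n = mapAlpha n * τ ∧ τ * mapBeta n = mapBeta n * τ ∧ τ * P * τ⁻¹ = Q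

/-- The setoid of maps (restricted by a property `Q`) under map isomorphism. -/
def mapSetoid (n : ℕ) (Q : Equiv.Perm (Quadricells n) → Prop) :
    Setoid {P : Equiv.Perm (Quadricells n) // Q P} where
  r P₁ P₂ := MapIso P₁.val P₂.val
  iseqv := by
    constructor
    · intro P
      exact ⟨1, by simp, by simp, by simp⟩
    · rintro P Q ⟨τ, h1, h2, h3⟩
      refine ⟨τ⁻¹, (Commute.inv_left h1 : _), (Commute.inv_left h2 : _), ?_⟩
      rw [← h3]; group
    · rintro P Q R ⟨τ, h1, h2, h3⟩ ⟨σ, g1, g2, g3⟩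
      refine ⟨σ * τ, (Commute.mul_left g1 h1 : _), (Commute.mul_left g2 h2 : _), ?_⟩
      rw [← g3, ← h3]; group

lemma perm_pow_apply_eq_iff {X : Type*} (f : Equiv.Perm X) (x : X) (k : ℕ) :
    (f ^ k) x = x ↔ Function.minimalPeriod f x ∣ k := by
  rw [← Function.isPeriodicPt_iff_minimalPeriod_dvd]
  simp [Function.IsPeriodicPt, Function.IsFixedPt, ← Equiv.Perm.coe_pow]

lemma orbLen_eq_minimalPeriod {X : Type*} [Finite X] (f : Equiv.Perm X) (x : X) :
    orbLen f x = Function.minimalPeriod f x := by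
  have hset : {y | ∃ m : ℤ, (f ^ m) x = y} = MulAction.orbit (Subgroup.zpowers f) x := by
    ext y
    constructor
    · rintro ⟨m, rfl⟩
      exact ⟨⟨f ^ m, Subgroup.zpow_mem _ (Subgroup.mem_zpowers f) m⟩, rfl⟩
    · rintro ⟨⟨u, hu⟩, rfl⟩
      obtain ⟨m, rfl⟩ := Subgroup.mem_zpowers_iff.mp hu
      exact ⟨m, rfl⟩
  rw [orbLen, hset]
  haveI : Fintype (MulAction.orbit (Subgroup.zpowers f) x) := (Set.toFinite _).fintype
  rw [← Nat.card_coe_set_eq, Nat.card_eq_fintype_card, ← MulAction.minimalPeriod_eq_card]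
  rfl


lemma gStar_pow_apply {n : ℕ} (g : Equiv.Perm (Fin n)) (k : ℕ) (x : Quadricells n) :
    (((gStar g) ^ k) x : (Fin n × Fin n) × Bool) =
      (((g ^ k) x.val.1.1, (g ^ k) x.val.1.2), x.val.2) := by
  induction k generalizing x with
  | zero => simp
  | succ k ih =>
    rw [pow_succ, Equiv.Perm.mul_apply, ih (gStar g x)]
    have h1 : ((gStar g x : (Fin n × Fin n) × Bool)) = ((g x.val.1.1, g x.val.1.2), x.val.2) := rfl
    rw [h1]
    simp [pow_succ, Equiv.Perm.mul_apply]

lemma gStar_pow_fix {n : ℕ} (g : Equiv.Perm (Fin n)) (k : ℕ) (x : Quadricells n) :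
    ((gStar g) ^ k) x = x ↔ (g ^ k) x.val.1.1 = x.val.1.1 ∧ (g ^ k) x.val.1.2 = x.val.1.2 := by
  rw [Subtype.ext_iff, gStar_pow_apply]
  constructor
  · intro h
    exact ⟨congrArg (fun p => p.1.1) h, congrArg (fun p => p.1.2) h⟩
  · rintro ⟨h1, h2⟩
    rw [h1, h2]

lemma minimalPeriod_gStar {n : ℕ} (g : Equiv.Perm (Fin n)) (x : Quadricells n) :
    Function.minimalPeriod (gStar g) x =
      Nat.lcm (Function.minimalPeriod g x.val.1.1) (Function.minimalPeriod g x.val.1.2) := by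
  apply Nat.dvd_antisymm
  · rw [← perm_pow_apply_eq_iff, gStar_pow_fix]
    exact ⟨(perm_pow_apply_eq_iff g _ _).mpr (Nat.dvd_lcm_left _ _),
      (perm_pow_apply_eq_iff g _ _).mpr (Nat.dvd_lcm_right _ _)⟩
  · have h := (perm_pow_apply_eq_iff (gStar g) x _).mpr
      (dvd_refl (Function.minimalPeriod (gStar g) x))
    rw [gStar_pow_fix] at h
    exact Nat.lcm_dvd ((perm_pow_apply_eq_iff g _ _).mp h.1)
      ((perm_pow_apply_eq_iff g _ _).mp h.2)

/-- If `g ∈ S_n` stabilizes some complete map of order `n ≥ 3`, then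
`lcm(l^g(i), l^g(j))` is the same for all pairs of distinct vertices. -/
theorem complete_map_aut_lcm_const (n : ℕ) (hn : 3 ≤ n) (g : Equiv.Perm (Fin n))
    (h : ∃ P : Equiv.Perm (Quadricells n), IsCompleteMap P ∧ gStar g * P * (gStar g)⁻¹ = P) :
    ∀ i j k l : Fin n, i ≠ j → k ≠ l →
      Nat.lcm (orbLen g i) (orbLen g j) = Nat.lcm (orbLen g k) (orbLen g l) := by
  classical
  obtain ⟨P, ⟨hP1, hP2, hP3, hP4⟩, hcomm⟩ := h
  have hcm : Commute (gStar g) P := mul_inv_eq_iff_eq_mul.mp hcomm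
  have hneg : ∀ y : Quadricells n,
      ((P⁻¹ y : Quadricells n) : (Fin n × Fin n) × Bool).1.1
        = (y : (Fin n × Fin n) × Bool).1.1 := by
    intro y
    conv_rhs => rw [← P.apply_symm_apply y]
    exact (hP1 (P⁻¹ y)).symm
  have hfirst : ∀ (m : ℤ) (y : Quadricells n),
      (((P ^ m) y : Quadricells n) : (Fin n × Fin n) × Bool).1.1
        = (y : (Fin n × Fin n) × Bool).1.1 := by
    intro m
    induction m using Int.induction_on with
    | zero => intro y; simp
    | succ k ih =>
      intro y
      have hstep : (P ^ ((k : ℤ) + 1)) y = (P ^ (k : ℤ)) (P y) := by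
        rw [zpow_add_one]; rfl
      rw [hstep, ih (P y), hP1 y]
    | pred k ih =>
      intro y
      have hstep : (P ^ (-(k : ℤ) - 1)) y = (P ^ (-(k : ℤ))) (P⁻¹ y) := by
        rw [zpow_sub_one]; rfl
      rw [hstep, ih (P⁻¹ y), hneg y]
  have horb : ∀ (x : Quadricells n) (v : Fin n), v ≠ (x : (Fin n × Fin n) × Bool).1.1 →
      ∃ m : ℤ, (((P ^ m) x : Quadricells n) : (Fin n × Fin n) × Bool).1.2 = v := by
    intro x v hv
    set S : Set (Quadricells n) := {y | ∃ m : ℤ, (P ^ m) x = y} with hSdef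
    haveI : Fintype S := (Set.toFinite _).fintype
    have hScard : Fintype.card S = n - 1 := by
      rw [← Nat.card_eq_fintype_card, Nat.card_coe_set_eq]
      exact hP4 x
    let φ : S → {w : Fin n // w ≠ (x : (Fin n × Fin n) × Bool).1.1} := fun y =>
      ⟨(y.val : (Fin n × Fin n) × Bool).1.2, by
        obtain ⟨m, hm⟩ := y.2
        have h1 : (y.val : (Fin n × Fin n) × Bool).1.1
            = (x : (Fin n × Fin n) × Bool).1.1 := by
          rw [← hm]; exact hfirst m x
        exact fun hc => y.val.prop (h1.trans hc.symm)⟩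
    have hinj : Function.Injective φ := by
      rintro ⟨y, my, hy⟩ ⟨z, mz, hz⟩ hyz
      have hy1 : (y : (Fin n × Fin n) × Bool).1.1 = (x : (Fin n × Fin n) × Bool).1.1 := by
        rw [← hy]; exact hfirst my x
      have hz1 : (z : (Fin n × Fin n) × Bool).1.1 = (x : (Fin n × Fin n) × Bool).1.1 := by
        rw [← hz]; exact hfirst mz x
      have hyz2 : (y : (Fin n × Fin n) × Bool).1.2 = (z : (Fin n × Fin n) × Bool).1.2 :=
        congrArg Subtype.val hyz
      apply Subtype.ext
      by_cases hb : (y : (Fin n × Fin n) × Bool).2 = (z : (Fin n × Fin n) × Bool).2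
      · exact Subtype.ext (Prod.ext (Prod.ext (hy1.trans hz1.symm) hyz2) hb)
      · exfalso
        have hb2 : (z : (Fin n × Fin n) × Bool).2 = !(y : (Fin n × Fin n) × Bool).2 := by
          cases h2 : (y : (Fin n × Fin n) × Bool).2 <;>
            cases h3 : (z : (Fin n × Fin n) × Bool).2 <;> simp_all
        have hz_eq : z = mapAlpha n y := by
          apply Subtype.ext
          exact Prod.ext (Prod.ext (hz1.trans hy1.symm) hyz2.symm) hb2
        have hPz : (P ^ (mz - my)) y = mapAlpha n y := by
          rw [← hz_eq, ← hy]
          calc (P ^ (mz - my)) ((P ^ my) x) = ((P ^ (mz - my)) * (P ^ my)) x := rfl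
            _ = (P ^ mz) x := by rw [← zpow_add, sub_add_cancel]
            _ = z := hz
        exact hP3 y (mz - my) hPz
    have hcard2 : Fintype.card {w : Fin n // w ≠ (x : (Fin n × Fin n) × Bool).1.1}
        = n - 1 := by
      simp [Ne, Fintype.card_subtype_compl]
    have hbij : Function.Bijective φ :=
      (Fintype.bijective_iff_injective_and_card φ).mpr ⟨hinj, by rw [hScard, hcard2]⟩
    obtain ⟨⟨y, hyS⟩, hy⟩ := hbij.2 ⟨v, hv⟩
    obtain ⟨m, hm⟩ := hyS
    exact ⟨m, by rw [hm]; exact congrArg Subtype.val hy⟩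
  have hker : ∀ (k : ℕ) (x : Quadricells n), ((gStar g) ^ k) x = x → g ^ k = 1 := by
    intro k x hx
    ext v
    by_cases hvi : v = (x : (Fin n × Fin n) × Bool).1.1
    · have h1 := (gStar_pow_fix g k x).mp hx
      rw [hvi]
      simpa using congrArg Fin.val h1.1
    · obtain ⟨m, hm⟩ := horb x v hvi
      have hfix : ((gStar g) ^ k) ((P ^ m) x) = (P ^ m) x := by
        have hc := ((hcm.pow_left k).zpow_right m).eq
        calc ((gStar g) ^ k) ((P ^ m) x) = (((gStar g) ^ k) * (P ^ m)) x := rfl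
          _ = ((P ^ m) * ((gStar g) ^ k)) x := by rw [hc]
          _ = (P ^ m) x := by rw [Equiv.Perm.mul_apply, hx]
      have h2 := ((gStar_pow_fix g k _).mp hfix).2
      rw [hm] at h2
      simpa using congrArg Fin.val h2
  have key : ∀ i j : Fin n, i ≠ j →
      Nat.lcm (orbLen g i) (orbLen g j) = orderOf g := by
    intro i j hij
    rw [orbLen_eq_minimalPeriod, orbLen_eq_minimalPeriod]
    have hmp : Function.minimalPeriod (gStar g) (⟨((i, j), true), hij⟩ : Quadricells n)
        = Nat.lcm (Function.minimalPeriod g i) (Function.minimalPeriod g j) :=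
      minimalPeriod_gStar g _
    rw [← hmp]
    apply Nat.dvd_antisymm
    · rw [← perm_pow_apply_eq_iff, gStar_pow_fix]
      constructor <;> simp [pow_orderOf_eq_one g]
    · have hx : ((gStar g) ^ (Function.minimalPeriod (gStar g)
          (⟨((i, j), true), hij⟩ : Quadricells n))) (⟨((i, j), true), hij⟩ : Quadricells n)
          = (⟨((i, j), true), hij⟩ : Quadricells n) :=
        (perm_pow_apply_eq_iff _ _ _).mpr dvd_rfl
      exact orderOf_dvd_of_pow_eq_one (hker _ _ hx)
  intro i j k l hij hkl
  rw [key i j hij, key k l hkl]
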